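/- For the semi-discrete two-species scheme with charges q_1, q_2 and g_j^i = c_j^i e^{q_i ψ_j}, the multi-species free energy F = h∑_{i=1}^m ∑_{j=1}^N (c_j^i ln c_j^i + q_i c_j^i ψ_j / 2) + (σ_a ψ_1 + σ_b ψ_N)/2 satisfies dF/dt = −(1/h)∑_{i=1}^m ∑_{j=1}^{N−1} e^{−q_i(ψ_{j+1}+ψ_j)/2}(ln g_{j+1}^i − ln g_j^i)(g_{j+1}^i − g_j^i) ≤ 0. -/

import Mathlib

open Finset

private lemma tele_sum (f : ℕ → ℝ) (N : ℕ) :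
    ∑ j ∈ Finset.Icc 1 N, (f j - f (j - 1)) = f N - f 0 := by
  induction N with
  | zero => simp
  | succ n ih =>
    rw [Finset.sum_Icc_succ_top (Nat.one_le_iff_ne_zero.mpr (Nat.succ_ne_zero n)), ih]
    simp only [Nat.add_sub_cancel]
    ring

private lemma icc_range (f : ℕ → ℝ) (M : ℕ) :
    ∑ j ∈ Finset.Icc 1 M, f j = ∑ k ∈ Finset.range M, f (k + 1) := by
  induction M with
  | zero => simp
  | succ n ih =>
    rw [Finset.sum_Icc_succ_top (by omega), Finset.sum_range_succ, ih]

private lemma abel_core (Fl a : ℕ → ℝ) (N : ℕ) :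
    ∑ j ∈ Finset.Icc 1 N, (Fl j - Fl (j - 1)) * a j
      + ∑ j ∈ Finset.range N, Fl j * (a (j + 1) - a j)
      = Fl N * a N - Fl 0 * a 0 := by
  induction N with
  | zero => simp
  | succ n ih =>
    rw [Finset.sum_Icc_succ_top (Nat.one_le_iff_ne_zero.mpr (Nat.succ_ne_zero n)),
        Finset.sum_range_succ]
    simp only [Nat.add_sub_cancel]
    linarith [ih]

private lemma abel_sum (Fl a : ℕ → ℝ) (N : ℕ) (hN : 1 ≤ N)
    (h0 : Fl 0 = 0) (hNz : Fl N = 0) :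
    ∑ j ∈ Finset.Icc 1 N, (Fl j - Fl (j - 1)) * a j
      = -∑ j ∈ Finset.Icc 1 (N - 1), Fl j * (a (j + 1) - a j) := by
  have hc := abel_core Fl a N
  rw [h0, hNz] at hc
  have hrange : ∑ j ∈ Finset.range N, Fl j * (a (j + 1) - a j)
      = ∑ j ∈ Finset.Icc 1 (N - 1), Fl j * (a (j + 1) - a j) := by
    obtain ⟨M, rfl⟩ : ∃ M, N = M + 1 := ⟨N - 1, by omega⟩
    simp only [Nat.add_sub_cancel]
    rw [Finset.sum_range_succ' (fun j => Fl j * (a (j + 1) - a j)) M, h0]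
    rw [icc_range (fun j => Fl j * (a (j + 1) - a j)) M]
    simp
  rw [hrange] at hc
  linarith [hc]

private lemma green_sum (a b : ℕ → ℝ) (N : ℕ) :
    ∑ j ∈ Finset.Icc 1 N, (a (j + 1) - 2 * a j + a (j - 1)) * b j
      - ∑ j ∈ Finset.Icc 1 N, (b (j + 1) - 2 * b j + b (j - 1)) * a j
      = (a (N + 1) * b N - a N * b (N + 1)) - (a 1 * b 0 - a 0 * b 1) := by
  have h1 : ∀ j ∈ Finset.Icc 1 N,
      (a (j + 1) - 2 * a j + a (j - 1)) * b j - (b (j + 1) - 2 * b j + b (j - 1)) * a j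
      = (fun j => a (j + 1) * b j - a j * b (j + 1)) j
        - (fun j => a (j + 1) * b j - a j * b (j + 1)) (j - 1) := by
    intro j hj
    obtain ⟨k, rfl⟩ : ∃ k, j = k + 1 := ⟨j - 1, by have := (Finset.mem_Icc.mp hj).1; omega⟩
    simp only [Nat.add_sub_cancel]
    ring
  rw [← Finset.sum_sub_distrib, Finset.sum_congr rfl h1, tele_sum]

/-- Semi-discrete free energy dissipation for the multi-species scheme. -/
theorem multispecies_free_energy_dissipation
    (N m : ℕ) (hN : 1 ≤ N) (hm : 1 ≤ m) (h : ℝ) (hh : 0 < h)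
    (σa σb : ℝ) (q : ℕ → ℝ)
    (c g : ℕ → ℕ → ℝ → ℝ) (ψ : ℕ → ℝ → ℝ) (Fl : ℕ → ℕ → ℝ → ℝ)
    (hgdef : ∀ i j t, g i j t = c i j t * Real.exp (q i * ψ j t))
    (hcpos : ∀ i ∈ Finset.Icc 1 m, ∀ j ∈ Finset.Icc 1 N, ∀ t : ℝ, 0 < c i j t)
    (hψdiff : ∀ j, Differentiable ℝ (ψ j))
    (hFl0 : ∀ i t, Fl i 0 t = 0) (hFlN : ∀ i t, Fl i N t = 0)
    (hFl : ∀ i ∈ Finset.Icc 1 m, ∀ j, 1 ≤ j → j < N → ∀ t : ℝ,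
      Fl i j t = Real.exp (-(q i * ((ψ j t + ψ (j + 1) t) / 2))) * (g i (j + 1) t - g i j t))
    (hscheme : ∀ i ∈ Finset.Icc 1 m, ∀ j ∈ Finset.Icc 1 N, ∀ t : ℝ,
      HasDerivAt (c i j) ((Fl i j t - Fl i (j - 1) t) / h ^ 2) t)
    (hpoisson : ∀ t : ℝ, ∀ j ∈ Finset.Icc 1 N,
      ψ (j + 1) t - 2 * ψ j t + ψ (j - 1) t
        = -h ^ 2 * ∑ i ∈ Finset.Icc 1 m, q i * c i j t)
    (hbca : ∀ t : ℝ, ψ 0 t = ψ 1 t + h * σa)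
    (hbcb : ∀ t : ℝ, ψ (N + 1) t = ψ N t + h * σb)
    (F : ℝ → ℝ)
    (hF : ∀ t, F t = h * ∑ i ∈ Finset.Icc 1 m, ∑ j ∈ Finset.Icc 1 N,
        (c i j t * Real.log (c i j t) + q i * c i j t * ψ j t / 2)
      + (σa * ψ 1 t + σb * ψ N t) / 2) :
    ∀ t : ℝ,
      HasDerivAt F
        (-(1 / h) * ∑ i ∈ Finset.Icc 1 m, ∑ j ∈ Finset.Icc 1 (N - 1),
          Real.exp (-(q i * ((ψ (j + 1) t + ψ j t) / 2))) *
            (Real.log (g i (j + 1) t) - Real.log (g i j t)) * (g i (j + 1) t - g i j t)) t ∧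
      -(1 / h) * ∑ i ∈ Finset.Icc 1 m, ∑ j ∈ Finset.Icc 1 (N - 1),
          Real.exp (-(q i * ((ψ (j + 1) t + ψ j t) / 2))) *
            (Real.log (g i (j + 1) t) - Real.log (g i j t)) * (g i (j + 1) t - g i j t) ≤ 0 := by
  intro t
  have hne : h ≠ 0 := ne_of_gt hh
  set P : ℕ → ℝ := fun j => deriv (ψ j) t with hPdef
  set D : ℕ → ℕ → ℝ := fun i j => (Fl i j t - Fl i (j - 1) t) / h ^ 2 with hDdef
  have hP : ∀ j, HasDerivAt (ψ j) (P j) t := by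
    intro j
    rw [hPdef]
    exact (hψdiff j t).hasDerivAt
  -- boundary conditions for the derivative of ψ
  have hP0 : P 0 = P 1 := by
    have h1 : HasDerivAt (ψ 0) (P 1) t := by
      have e : ψ 0 = fun s => ψ 1 s + h * σa := funext hbca
      rw [e]
      exact (hP 1).add_const _
    simp only [hPdef]
    exact h1.deriv
  have hPN : P (N + 1) = P N := by
    have h1 : HasDerivAt (ψ (N + 1)) (P N) t := by
      have e : ψ (N + 1) = fun s => ψ N s + h * σb := funext hbcb
      rw [e]
      exact (hP N).add_const _
    simp only [hPdef]
    exact h1.deriv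
  -- differentiated Poisson equation
  have hDP : ∀ j ∈ Finset.Icc 1 N,
      P (j + 1) - 2 * P j + P (j - 1) = -h ^ 2 * ∑ i ∈ Finset.Icc 1 m, q i * D i j := by
    intro j hj
    have hL : HasDerivAt (fun s => ψ (j + 1) s - 2 * ψ j s + ψ (j - 1) s)
        (P (j + 1) - 2 * P j + P (j - 1)) t :=
      ((hP (j + 1)).sub ((hP j).const_mul 2)).add (hP (j - 1))
    have hR : HasDerivAt (fun s => -h ^ 2 * ∑ i ∈ Finset.Icc 1 m, q i * c i j s)
        (-h ^ 2 * ∑ i ∈ Finset.Icc 1 m, q i * D i j) t := by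
      simp only [hDdef]
      exact (HasDerivAt.fun_sum fun i hi => (hscheme i hi j hj t).const_mul (q i)).const_mul _
    have heq : (fun s => ψ (j + 1) s - 2 * ψ j s + ψ (j - 1) s)
        = fun s => -h ^ 2 * ∑ i ∈ Finset.Icc 1 m, q i * c i j s :=
      funext fun s => hpoisson s j hj
    rw [heq] at hL
    exact hL.unique hR
  -- derivative of F
  have hFfun : F = fun s => h * ∑ i ∈ Finset.Icc 1 m, ∑ j ∈ Finset.Icc 1 N,
      (c i j s * Real.log (c i j s) + q i * c i j s * ψ j s / 2)
      + (σa * ψ 1 s + σb * ψ N s) / 2 := funext hF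
  have hderF : HasDerivAt F
      (h * ∑ i ∈ Finset.Icc 1 m, ∑ j ∈ Finset.Icc 1 N,
        (D i j * (Real.log (c i j t) + 1) + q i * (D i j * ψ j t + c i j t * P j) / 2)
      + (σa * P 1 + σb * P N) / 2) t := by
    rw [hFfun]
    apply HasDerivAt.add
    · apply HasDerivAt.const_mul
      apply HasDerivAt.fun_sum
      intro i hi
      apply HasDerivAt.fun_sum
      intro j hj
      have hc := hscheme i hi j hj t
      have hcp := hcpos i hi j hj t
      have h1 : HasDerivAt (fun s => c i j s * Real.log (c i j s))
          (D i j * (Real.log (c i j t) + 1)) t := by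
        have h2 := hc.fun_mul (hc.log hcp.ne')
        refine h2.congr_deriv ?_
        simp only [hDdef]
        field_simp
      have h3 : HasDerivAt (fun s => q i * c i j s * ψ j s / 2)
          (q i * (D i j * ψ j t + c i j t * P j) / 2) t := by
        have h4 := ((hc.const_mul (q i)).fun_mul (hP j)).div_const 2
        refine h4.congr_deriv ?_
        simp only [hDdef]
        ring
      exact h1.add h3
    · exact (((hP 1).const_mul σa).add ((hP N).const_mul σb)).div_const 2
  -- positivity of g
  have hgpos : ∀ i ∈ Finset.Icc 1 m, ∀ j ∈ Finset.Icc 1 N, 0 < g i j t := by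
    intro i hi j hj
    rw [hgdef]
    have := hcpos i hi j hj t
    positivity
  -- row sums of D vanish
  have hrow0 : ∀ i ∈ Finset.Icc 1 m, ∑ j ∈ Finset.Icc 1 N, D i j = 0 := by
    intro i hi
    have h0 := tele_sum (fun j => Fl i j t) N
    simp only [hDdef]
    rw [← Finset.sum_div, h0, hFl0, hFlN]
    simp
  -- Abel summation for each row
  have hrowlog : ∀ i ∈ Finset.Icc 1 m,
      ∑ j ∈ Finset.Icc 1 N, D i j * Real.log (g i j t)
      = -(1 / h ^ 2) * ∑ j ∈ Finset.Icc 1 (N - 1),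
          Fl i j t * (Real.log (g i (j + 1) t) - Real.log (g i j t)) := by
    intro i hi
    have ha := abel_sum (fun j => Fl i j t) (fun j => Real.log (g i j t)) N hN
      (hFl0 i t) (hFlN i t)
    calc ∑ j ∈ Finset.Icc 1 N, D i j * Real.log (g i j t)
        = (∑ j ∈ Finset.Icc 1 N, (Fl i j t - Fl i (j - 1) t) * Real.log (g i j t)) / h ^ 2 := by
          rw [Finset.sum_div]
          refine Finset.sum_congr rfl fun j hj => ?_
          simp only [hDdef]
          ring
      _ = (-∑ j ∈ Finset.Icc 1 (N - 1),
            Fl i j t * (Real.log (g i (j + 1) t) - Real.log (g i j t))) / h ^ 2 := by rw [ha]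
      _ = -(1 / h ^ 2) * ∑ j ∈ Finset.Icc 1 (N - 1),
            Fl i j t * (Real.log (g i (j + 1) t) - Real.log (g i j t)) := by ring
  -- row identity combining entropy and drift terms
  have hrow : ∀ i ∈ Finset.Icc 1 m,
      ∑ j ∈ Finset.Icc 1 N, (D i j * (Real.log (c i j t) + 1) + q i * D i j * ψ j t)
      = -(1 / h ^ 2) * ∑ j ∈ Finset.Icc 1 (N - 1),
          Fl i j t * (Real.log (g i (j + 1) t) - Real.log (g i j t)) := by
    intro i hi
    have e1 : ∀ j ∈ Finset.Icc 1 N,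
        D i j * (Real.log (c i j t) + 1) + q i * D i j * ψ j t
        = D i j * Real.log (g i j t) + D i j := by
      intro j hj
      rw [hgdef, Real.log_mul (hcpos i hi j hj t).ne' (Real.exp_ne_zero _), Real.log_exp]
      ring
    rw [Finset.sum_congr rfl e1, Finset.sum_add_distrib, hrow0 i hi, add_zero, hrowlog i hi]
  -- electrostatic symmetry
  have hTT : (∑ i ∈ Finset.Icc 1 m, ∑ j ∈ Finset.Icc 1 N, q i * c i j t * P j)
      - (∑ i ∈ Finset.Icc 1 m, ∑ j ∈ Finset.Icc 1 N, q i * D i j * ψ j t)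
      = -((σa * P 1 + σb * P N) / h) := by
    have h3 : ∑ i ∈ Finset.Icc 1 m, ∑ j ∈ Finset.Icc 1 N, q i * c i j t * P j
        = -(1 / h ^ 2) * ∑ j ∈ Finset.Icc 1 N,
            (ψ (j + 1) t - 2 * ψ j t + ψ (j - 1) t) * P j := by
      rw [Finset.sum_comm, Finset.mul_sum]
      refine Finset.sum_congr rfl fun j hj => ?_
      rw [hpoisson t j hj, ← Finset.sum_mul]
      field_simp
    have h2 : ∑ i ∈ Finset.Icc 1 m, ∑ j ∈ Finset.Icc 1 N, q i * D i j * ψ j t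
        = -(1 / h ^ 2) * ∑ j ∈ Finset.Icc 1 N,
            (P (j + 1) - 2 * P j + P (j - 1)) * ψ j t := by
      rw [Finset.sum_comm, Finset.mul_sum]
      refine Finset.sum_congr rfl fun j hj => ?_
      rw [hDP j hj, ← Finset.sum_mul]
      field_simp
    have hg := green_sum (fun j => ψ j t) P N
    rw [hbca t, hbcb t, hP0, hPN] at hg
    have hAB : (∑ j ∈ Finset.Icc 1 N, (ψ (j + 1) t - 2 * ψ j t + ψ (j - 1) t) * P j)
        - (∑ j ∈ Finset.Icc 1 N, (P (j + 1) - 2 * P j + P (j - 1)) * ψ j t)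
        = h * σb * P N + h * σa * P 1 := by linear_combination hg
    rw [h3, h2]
    field_simp
    linear_combination (-1) * hAB
  -- splitting the main sum
  have hsplit : (∑ i ∈ Finset.Icc 1 m, ∑ j ∈ Finset.Icc 1 N,
        (D i j * (Real.log (c i j t) + 1) + q i * (D i j * ψ j t + c i j t * P j) / 2))
      = (∑ i ∈ Finset.Icc 1 m, ∑ j ∈ Finset.Icc 1 N,
          (D i j * (Real.log (c i j t) + 1) + q i * D i j * ψ j t))
      + ((∑ i ∈ Finset.Icc 1 m, ∑ j ∈ Finset.Icc 1 N, q i * c i j t * P j)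
        - (∑ i ∈ Finset.Icc 1 m, ∑ j ∈ Finset.Icc 1 N, q i * D i j * ψ j t)) / 2 := by
    simp only [← Finset.sum_sub_distrib, Finset.sum_div, ← Finset.sum_add_distrib]
    refine Finset.sum_congr rfl fun i _ => ?_
    refine Finset.sum_congr rfl fun j _ => ?_
    ring
  have hWval : (∑ i ∈ Finset.Icc 1 m, ∑ j ∈ Finset.Icc 1 N,
        (D i j * (Real.log (c i j t) + 1) + q i * D i j * ψ j t))
      = -(1 / h ^ 2) * ∑ i ∈ Finset.Icc 1 m, ∑ j ∈ Finset.Icc 1 (N - 1),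
          Fl i j t * (Real.log (g i (j + 1) t) - Real.log (g i j t)) := by
    rw [Finset.mul_sum]
    exact Finset.sum_congr rfl fun i hi => by rw [hrow i hi]
  have hS : ∑ i ∈ Finset.Icc 1 m, ∑ j ∈ Finset.Icc 1 (N - 1),
        Fl i j t * (Real.log (g i (j + 1) t) - Real.log (g i j t))
      = ∑ i ∈ Finset.Icc 1 m, ∑ j ∈ Finset.Icc 1 (N - 1),
          Real.exp (-(q i * ((ψ (j + 1) t + ψ j t) / 2))) *
            (Real.log (g i (j + 1) t) - Real.log (g i j t)) * (g i (j + 1) t - g i j t) := by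
    refine Finset.sum_congr rfl fun i hi => ?_
    refine Finset.sum_congr rfl fun j hj => ?_
    obtain ⟨hj1, hj2⟩ := Finset.mem_Icc.mp hj
    rw [hFl i hi j hj1 (by omega) t]
    rw [show ψ j t + ψ (j + 1) t = ψ (j + 1) t + ψ j t from add_comm _ _]
    ring
  have hx : ∀ x y : ℝ, h * (-(1 / h ^ 2) * x + -(y / h) / 2) + y / 2 = -(1 / h) * x := by
    intro x y
    field_simp
    ring
  have hval : h * ∑ i ∈ Finset.Icc 1 m, ∑ j ∈ Finset.Icc 1 N,
        (D i j * (Real.log (c i j t) + 1) + q i * (D i j * ψ j t + c i j t * P j) / 2)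
      + (σa * P 1 + σb * P N) / 2
      = -(1 / h) * ∑ i ∈ Finset.Icc 1 m, ∑ j ∈ Finset.Icc 1 (N - 1),
          Real.exp (-(q i * ((ψ (j + 1) t + ψ j t) / 2))) *
            (Real.log (g i (j + 1) t) - Real.log (g i j t)) * (g i (j + 1) t - g i j t) := by
    rw [hsplit, hWval, hTT, hS]
    exact hx _ _
  rw [hval] at hderF
  refine ⟨hderF, ?_⟩
  have hsum_nonneg : 0 ≤ ∑ i ∈ Finset.Icc 1 m, ∑ j ∈ Finset.Icc 1 (N - 1),
      Real.exp (-(q i * ((ψ (j + 1) t + ψ j t) / 2))) *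
        (Real.log (g i (j + 1) t) - Real.log (g i j t)) * (g i (j + 1) t - g i j t) := by
    refine Finset.sum_nonneg fun i hi => Finset.sum_nonneg fun j hj => ?_
    obtain ⟨hj1, hj2⟩ := Finset.mem_Icc.mp hj
    have hgl : 0 < g i j t := hgpos i hi j (Finset.mem_Icc.mpr ⟨hj1, by omega⟩)
    have hgr : 0 < g i (j + 1) t := hgpos i hi (j + 1) (Finset.mem_Icc.mpr ⟨by omega, by omega⟩)
    rw [mul_assoc]
    refine mul_nonneg (Real.exp_pos _).le ?_
    rcases le_total (g i j t) (g i (j + 1) t) with hle | hle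
    · have hl : Real.log (g i j t) ≤ Real.log (g i (j + 1) t) := Real.log_le_log hgl hle
      nlinarith
    · have hl : Real.log (g i (j + 1) t) ≤ Real.log (g i j t) := Real.log_le_log hgr hle
      nlinarith
  have h1 : 0 ≤ (1 / h) * ∑ i ∈ Finset.Icc 1 m, ∑ j ∈ Finset.Icc 1 (N - 1),
      Real.exp (-(q i * ((ψ (j + 1) t + ψ j t) / 2))) *
        (Real.log (g i (j + 1) t) - Real.log (g i j t)) * (g i (j + 1) t - g i j t) :=
    mul_nonneg (by positivity) hsum_nonneg
  linarith
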